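/- No-Swapping Lemma: Consider an auction over queries X where agent i bids b_i and has conversion rate q_i(x) > 0 on query x, and the winner of query x is the agent maximizing b_i·q_i(x). Given two bid profiles b and b', build a directed graph G on the agents with an edge (i,j) whenever there exists a query x won by i under profile b and won by j under profile b'. Then G contains no directed cycle. -/
import Mathlib

/-- Cyclic product shift: if `g k = g 0` then `∏_{i<k} g (i+1) = ∏_{i<k} g i`. -/
lemma cyclic_prod_shift {M : Type*} [CommMonoid M] (g : ℕ → M) (k : ℕ) (hk : 0 < k)
    (hc : g k = g 0) : ∏ i ∈ Finset.range k, g (i + 1) = ∏ i ∈ Finset.range k, g i := by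
  obtain ⟨m, rfl⟩ := Nat.exists_eq_succ_of_ne_zero hk.ne'
  rw [Finset.prod_range_succ, Finset.prod_range_succ' g, hc, mul_comm]

theorem stmt13 {ι X : Type*} (q : ι → X → ℝ) (b b' : ι → ℝ)
    (hq : ∀ i x, 0 < q i x) (hb : ∀ i, 0 < b i) (hb' : ∀ i, 0 < b' i) :
    ¬ ∃ (k : ℕ) (c : ℕ → ι), 0 < k ∧ c k = c 0 ∧
        (∀ i < k, c i ≠ c (i + 1)) ∧
        ∀ i < k, ∃ x : X,
          (∀ j, j ≠ c i → b j * q j x < b (c i) * q (c i) x) ∧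
          (∀ j, j ≠ c (i + 1) → b' j * q j x < b' (c (i + 1)) * q (c (i + 1)) x) := by
  rintro ⟨k, c, hk, hck, hne, hwin⟩
  choose xd hxd hxd' using hwin
  -- make the witness a total function
  set x : ℕ → X := fun i => if h : i < k then xd i h else xd 0 hk with hxdef
  have hx : ∀ i < k, ∀ j, j ≠ c i → b j * q j (x i) < b (c i) * q (c i) (x i) := by
    intro i hi; simp only [hxdef, dif_pos hi]; exact hxd i hi
  have hx' : ∀ i < k, ∀ j, j ≠ c (i + 1) →
      b' j * q j (x i) < b' (c (i + 1)) * q (c (i + 1)) (x i) := by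
    intro i hi; simp only [hxdef, dif_pos hi]; exact hxd' i hi
  set s := Finset.range k with hs
  have hsne : s.Nonempty := ⟨0, Finset.mem_range.mpr hk⟩
  have P1 : ∏ i ∈ s, b (c (i + 1)) * q (c (i + 1)) (x i) <
      ∏ i ∈ s, b (c i) * q (c i) (x i) := by
    apply Finset.prod_lt_prod_of_nonempty _ _ hsne
    · intro i _; exact mul_pos (hb _) (hq _ _)
    · intro i hi
      exact hx i (Finset.mem_range.mp hi) _ (Ne.symm (hne i (Finset.mem_range.mp hi)))
  have P2 : ∏ i ∈ s, b' (c i) * q (c i) (x i) <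
      ∏ i ∈ s, b' (c (i + 1)) * q (c (i + 1)) (x i) := by
    apply Finset.prod_lt_prod_of_nonempty _ _ hsne
    · intro i _; exact mul_pos (hb' _) (hq _ _)
    · intro i hi
      exact hx' i (Finset.mem_range.mp hi) _ (hne i (Finset.mem_range.mp hi))
  have Bb : ∏ i ∈ s, b (c (i + 1)) = ∏ i ∈ s, b (c i) :=
    cyclic_prod_shift (fun i => b (c i)) k hk (by simp [hck])
  have Bb' : ∏ i ∈ s, b' (c (i + 1)) = ∏ i ∈ s, b' (c i) :=
    cyclic_prod_shift (fun i => b' (c i)) k hk (by simp [hck])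
  rw [Finset.prod_mul_distrib, Finset.prod_mul_distrib, Bb] at P1
  rw [Finset.prod_mul_distrib, Finset.prod_mul_distrib, Bb'] at P2
  have hBpos : 0 < ∏ i ∈ s, b (c i) := Finset.prod_pos fun i _ => hb _
  have hB'pos : 0 < ∏ i ∈ s, b' (c i) := Finset.prod_pos fun i _ => hb' _
  have Q1 := lt_of_mul_lt_mul_left P1 hBpos.le
  have Q2 := lt_of_mul_lt_mul_left P2 hB'pos.le
  exact absurd Q1 (not_lt.mpr Q2.le)
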